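/- For a fixed (data-independent) preferred output region S common to all datasets, the boosted mechanism's log-likelihood ratio equals the kernel log-likelihood ratio plus the constant L₁ = log((1-p̄'q)/(1-p̄q)), where p̄, p̄' are the kernel tail masses of S under the two neighboring datasets; in particular, if the kernel is (ε₀)-DP then the boosted mechanism is (ε₀ + |L₁|)-DP. -/

import Mathlib

open MeasureTheory Set
open scoped Classical

theorem stmt_7 (fX fX' : ℝ → ℝ) (S : Set ℝ) (pbar pbar' q ε₀ L₁ : ℝ)
    (hfX : ∀ y, 0 < fX y) (hfX' : ∀ y, 0 < fX' y)
    (h1 : ∫ y in Sᶜ, fX y = pbar) (h2 : ∫ y in Sᶜ, fX' y = pbar')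
    (hq0 : 0 ≤ q) (hq1 : q < 1)
    (hpos : 0 < 1 - pbar * q) (hpos' : 0 < 1 - pbar' * q)
    (hL₁ : L₁ = Real.log ((1 - pbar' * q) / (1 - pbar * q)))
    (gX gX' : ℝ → ℝ)
    (hgX : ∀ y, gX y =
      if y ∈ S then fX y / (1 - pbar * q) else fX y * (1 - q) / (1 - pbar * q))
    (hgX' : ∀ y, gX' y =
      if y ∈ S then fX' y / (1 - pbar' * q) else fX' y * (1 - q) / (1 - pbar' * q)) :
    (∀ y, Real.log (gX y / gX' y) = Real.log (fX y / fX' y) + L₁) ∧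
    ((∀ y, fX y ≤ Real.exp ε₀ * fX' y) →
      ∀ y, gX y ≤ Real.exp (ε₀ + |L₁|) * gX' y) := by
  have hq : 0 < 1 - q := by linarith
  have hratio : ∀ y, gX y / gX' y
      = (fX y / fX' y) * ((1 - pbar' * q) / (1 - pbar * q)) := by
    intro y
    rw [hgX y, hgX' y]
    by_cases hy : y ∈ S <;> simp only [hy, if_true, if_false]
    · rw [div_div_div_comm, div_div_eq_mul_div, mul_div_assoc]
    · rw [div_div_div_comm, div_div_eq_mul_div, mul_div_assoc,
        mul_div_mul_right _ _ hq.ne']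
  have hexpL : Real.exp L₁ = (1 - pbar' * q) / (1 - pbar * q) := by
    rw [hL₁, Real.exp_log (div_pos hpos' hpos)]
  constructor
  · intro y
    rw [hratio y, Real.log_mul
      (ne_of_gt (div_pos (hfX y) (hfX' y)))
      (ne_of_gt (div_pos hpos' hpos)), ← hexpL, Real.log_exp]
  · intro h y
    have hkey : Real.exp ε₀ * ((1 - pbar' * q) / (1 - pbar * q))
        ≤ Real.exp (ε₀ + |L₁|) := by
      rw [Real.exp_add, ← hexpL]
      exact mul_le_mul_of_nonneg_left
        (Real.exp_le_exp.mpr (le_abs_self L₁)) (Real.exp_pos ε₀).le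
    rw [hgX y, hgX' y]
    have hfy := h y
    have hf'pos := hfX' y
    have he := Real.exp_pos ε₀
    by_cases hy : y ∈ S <;> simp only [hy, if_true, if_false]
    · calc fX y / (1 - pbar * q) ≤ Real.exp ε₀ * fX' y / (1 - pbar * q) := by
            apply div_le_div_of_nonneg_right hfy hpos.le |>.trans_eq rfl
          _ = (Real.exp ε₀ * ((1 - pbar' * q) / (1 - pbar * q)))
              * (fX' y / (1 - pbar' * q)) := by
                have : 1 - q * pbar ≠ 0 := by rw [mul_comm]; exact hpos.ne'
                have : 1 - q * pbar' ≠ 0 := by rw [mul_comm]; exact hpos'.ne'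
                field_simp
          _ ≤ Real.exp (ε₀ + |L₁|) * (fX' y / (1 - pbar' * q)) := by
            exact mul_le_mul_of_nonneg_right hkey
              (div_pos hf'pos hpos').le
    · calc fX y * (1 - q) / (1 - pbar * q)
            ≤ Real.exp ε₀ * fX' y * (1 - q) / (1 - pbar * q) := by
            apply div_le_div_of_nonneg_right _ hpos.le
            exact mul_le_mul_of_nonneg_right hfy hq.le
          _ = (Real.exp ε₀ * ((1 - pbar' * q) / (1 - pbar * q)))
              * (fX' y * (1 - q) / (1 - pbar' * q)) := by
                have : 1 - q * pbar ≠ 0 := by rw [mul_comm]; exact hpos.ne'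
                have : 1 - q * pbar' ≠ 0 := by rw [mul_comm]; exact hpos'.ne'
                field_simp
          _ ≤ Real.exp (ε₀ + |L₁|) * (fX' y * (1 - q) / (1 - pbar' * q)) := by
            exact mul_le_mul_of_nonneg_right hkey
              (div_pos (mul_pos hf'pos hq) hpos').le
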